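/- For every sequence p̄ : ℤ → P̂ satisfying the linking equations f(π₀(m(p̄(k)))) = π₁(m(p̄(k+1))) for all k ∈ ℤ, one has π(m(p̄(i))) = π(m(p̄(j))) = π(p̄(0)^P) for all i, j ∈ ℤ. (Equation (4.6) of the paper: the Q-projection is constant along conditions of the amalgamation.) -/

import Mathlib

/-
STATEMENT 6 (equation (4.6) of the paper): along a sequence p̄ : ℤ → P̂
satisfying the linking equations f(π₀(m(p̄(k)))) = π₁(m(p̄(k+1))), the
Q-projection π(m(p̄(i))) is constant and equals π(p̄(0)^P).
-/

namespace Stmt6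

variable {B : Type*} [CompleteBooleanAlgebra B]

/-- `A` is a complete subalgebra of the complete Boolean algebra `B`. -/
def IsCompleteSubalgebra (A : Set B) : Prop :=
  ⊤ ∈ A ∧ (∀ a ∈ A, aᶜ ∈ A) ∧ ∀ S ⊆ A, sSup S ∈ A

/-- The canonical projection onto `A`. -/
def proj (A : Set B) (b : B) : B := sInf {a | a ∈ A ∧ b ≤ a}

/-- The meet `m(p̂) = p ⊓ b₀ ⊓ b₁` of the components of a triple. -/
def bm (t : B × B × B) : B := t.1 ⊓ t.2.1 ⊓ t.2.2

/-- Membership in the blowup `P̂`. -/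
def InBlowup (Q B0 B1 P : Set B) (t : B × B × B) : Prop :=
  t.1 ∈ P ∧ t.2.1 ∈ B0 ∧ t.2.2 ∈ B1 ∧ proj Q (bm t) = proj Q t.1

lemma le_proj (A : Set B) (b : B) : b ≤ proj A b :=
  le_sInf fun _ ha => ha.2

lemma proj_mem {A : Set B} (hA : IsCompleteSubalgebra A) (b : B) : proj A b ∈ A := by
  have h : proj A b = (sSup (compl '' {a | a ∈ A ∧ b ≤ a}))ᶜ := by
    rw [proj, sSup_image]
    simp [compl_iSup, sInf_eq_iInf]
  rw [h]
  exact hA.2.1 _ (hA.2.2 _ (by rintro x ⟨a, ⟨ha, _⟩, rfl⟩; exact hA.2.1 a ha))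

lemma proj_proj {Q A : Set B} (hQA : Q ⊆ A) (x : B) :
    proj Q (proj A x) = proj Q x := by
  unfold proj
  congr 1
  ext q
  constructor
  · rintro ⟨hq, hle⟩; exact ⟨hq, (le_proj A x).trans hle⟩
  · rintro ⟨hq, hle⟩; exact ⟨hq, sInf_le ⟨hQA hq, hle⟩⟩

theorem amalgamation_proj_constant (Q B0 B1 P : Set B)
    (hQ : IsCompleteSubalgebra Q) (hB0 : IsCompleteSubalgebra B0)
    (hB1 : IsCompleteSubalgebra B1)
    (hQB0 : Q ⊆ B0) (hQB1 : Q ⊆ B1)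
    (hPne : ∀ p ∈ P, p ≠ ⊥)
    -- f : B₀ → B₁ is an isomorphism of Boolean algebras fixing Q pointwise
    -- and commuting with the projection to Q; finv is its inverse.
    (f finv : B → B)
    (hf_mem : ∀ b ∈ B0, f b ∈ B1) (hfinv_mem : ∀ b ∈ B1, finv b ∈ B0)
    (hfinv_f : ∀ b ∈ B0, finv (f b) = b) (hf_finv : ∀ b ∈ B1, f (finv b) = b)
    (hf_inf : ∀ a ∈ B0, ∀ b ∈ B0, f (a ⊓ b) = f a ⊓ f b)
    (hf_sup : ∀ a ∈ B0, ∀ b ∈ B0, f (a ⊔ b) = f a ⊔ f b)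
    (hf_compl : ∀ a ∈ B0, f aᶜ = (f a)ᶜ)
    (hf_fixQ : ∀ q ∈ Q, f q = q)
    (hf_proj : ∀ b ∈ B0, proj Q (f b) = proj Q b)
    (pb : ℤ → B × B × B)
    (hpb : ∀ k : ℤ, InBlowup Q B0 B1 P (pb k))
    (hlink : ∀ k : ℤ, f (proj B0 (bm (pb k))) = proj B1 (bm (pb (k + 1)))) :
    ∀ i j : ℤ, proj Q (bm (pb i)) = proj Q (bm (pb j)) ∧
      proj Q (bm (pb i)) = proj Q (pb 0).1 := by
  have step : ∀ k : ℤ, proj Q (bm (pb k)) = proj Q (bm (pb (k + 1))) := by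
    intro k
    calc proj Q (bm (pb k)) = proj Q (proj B0 (bm (pb k))) := (proj_proj hQB0 _).symm
      _ = proj Q (f (proj B0 (bm (pb k)))) := (hf_proj _ (proj_mem hB0 _)).symm
      _ = proj Q (proj B1 (bm (pb (k + 1)))) := by rw [hlink k]
      _ = proj Q (bm (pb (k + 1))) := proj_proj hQB1 _
  have const : ∀ k : ℤ, proj Q (bm (pb k)) = proj Q (bm (pb 0)) := by
    intro k
    induction k using Int.induction_on with
    | zero => rfl
    | succ n ih => rw [← step n] at *; exact ih
    | pred n ih => rw [step (-n - 1)]; simpa using ih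
  intro i j
  refine ⟨(const i).trans (const j).symm, ?_⟩
  rw [const i, (hpb 0).2.2.2]

end Stmt6
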